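/- Let K be a field and M a finite J-trivial monoid. Let E denote the commutative monoid on the set of idempotents E(M) of M with product e ⋆ f := (e·f)^ω. Then the K-linear map Φ : MonoidAlgebra K M → MonoidAlgebra K E determined on the basis by Φ(x) = x^ω for x ∈ M is a surjective algebra homomorphism whose kernel is the Jacobson radical of MonoidAlgebra K M; in particular, Φ induces an algebra isomorphism (MonoidAlgebra K M)/rad ≅ MonoidAlgebra K E. -/

import Mathlib

set_option linter.unusedSectionVars false
set_option maxHeartbeats 1000000



def leJ {M : Type*} [Monoid M] (x y : M) : Prop := ∃ u v : M, x = u * y * v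

def JTrivial (M : Type*) [Monoid M] : Prop :=
  ∀ x y : M, {z : M | ∃ u v : M, z = u * x * v} = {z : M | ∃ u v : M, z = u * y * v} → x = y

open Classical

noncomputable def omegaPow {M : Type*} [Monoid M] (x : M) : M :=
  if h : ∃ e : M, IsIdempotentElem e ∧ ∃ n : ℕ, 0 < n ∧ e = x ^ n then h.choose else 1

lemma omegaPow_idem {M : Type*} [Monoid M] (x : M) : IsIdempotentElem (omegaPow x) := by
  unfold omegaPow
  split_ifs with h
  · exact h.choose_spec.1
  · exact IsIdempotentElem.one

section Basics
variable {M : Type*} [Monoid M]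

lemma pow_eq_mul_right' (x : M) {n : ℕ} (hn : 0 < n) : x ^ n = x ^ (n-1) * x := by
  rw [← pow_succ]; congr 1; omega

lemma pow_eq_mul_left' (x : M) {n : ℕ} (hn : 0 < n) : x ^ n = x * x ^ (n-1) := by
  rw [← pow_succ']; congr 1; omega

lemma exists_idem_pow [Finite M] (x : M) :
    ∃ e : M, IsIdempotentElem e ∧ ∃ n : ℕ, 0 < n ∧ e = x ^ n := by
  obtain ⟨m, n, hmn, hpow⟩ := Finite.exists_ne_map_eq_of_infinite (fun n : ℕ => x ^ n)
  wlog hlt : m < n generalizing m n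
  · exact this n m (Ne.symm hmn) hpow.symm (by omega)
  set p := n - m with hp
  have hp0 : 0 < p := by omega
  have hstep : ∀ t, m ≤ t → x ^ t = x ^ (t + p) := by
    intro t ht
    obtain ⟨s, rfl⟩ := Nat.exists_eq_add_of_le ht
    calc x ^ (m + s) = x ^ m * x ^ s := pow_add x m s
      _ = x ^ n * x ^ s := by rw [hpow]
      _ = x ^ (n + s) := (pow_add x n s).symm
      _ = x ^ (m + s + p) := by congr 1; omega
  have hmany : ∀ k t, m ≤ t → x ^ t = x ^ (t + k * p) := by
    intro k
    induction k with
    | zero => simp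
    | succ k ih =>
      intro t ht
      have := hstep (t + k * p) (by omega)
      rw [ih t ht, this]
      congr 1; ring
  refine ⟨x ^ ((m + 1) * p), ?_, (m + 1) * p, by positivity, rfl⟩
  show x ^ ((m+1)*p) * x ^ ((m+1)*p) = x ^ ((m+1)*p)
  rw [← pow_add]
  exact (hmany (m+1) ((m+1)*p) (by nlinarith)).symm

variable [Finite M]

lemma omegaPow_spec (x : M) : ∃ n : ℕ, 0 < n ∧ omegaPow x = x ^ n := by
  unfold omegaPow
  rw [dif_pos (exists_idem_pow x)]
  exact (exists_idem_pow x).choose_spec.2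

lemma IsIdempotentElem.pow_eq' {e : M} (he : IsIdempotentElem e) {n : ℕ} (hn : 0 < n) :
    e ^ n = e := by
  induction n with
  | zero => omega
  | succ n ih =>
    rcases Nat.eq_zero_or_pos n with h | h
    · simp [h]
    · rw [pow_succ, ih h, he]

lemma omegaPow_unique {x e : M} (he : IsIdempotentElem e) {n : ℕ} (hn : 0 < n)
    (hne : e = x ^ n) : omegaPow x = e := by
  obtain ⟨m, hm, hme⟩ := omegaPow_spec x
  have h1 : omegaPow x = (x ^ m) ^ n := ((omegaPow_idem x).pow_eq' hn).symm.trans (by rw [← hme])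
  rw [← pow_mul, mul_comm, pow_mul, ← hne] at h1
  rw [h1, he.pow_eq' hm]

lemma omegaPow_of_idem {e : M} (he : IsIdempotentElem e) : omegaPow e = e :=
  omegaPow_unique he Nat.one_pos (pow_one e).symm

end Basics

section JT
variable {M : Type*} [Monoid M] (hJ : JTrivial M)
include hJ

lemma leJ_antisymm {x y : M} (h1 : leJ x y) (h2 : leJ y x) : x = y := by
  obtain ⟨u, v, huv⟩ := h1
  obtain ⟨u', v', huv'⟩ := h2
  apply hJ
  ext z
  constructor
  · rintro ⟨a, b, rfl⟩
    exact ⟨a * u, v * b, by rw [huv]; simp only [mul_assoc]⟩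
  · rintro ⟨a, b, rfl⟩
    exact ⟨a * u', v' * b, by rw [huv']; simp only [mul_assoc]⟩

omit hJ in
lemma leJ_trans' {a b c : M} (h1 : leJ a b) (h2 : leJ b c) : leJ a c := by
  obtain ⟨u, v, rfl⟩ := h1
  obtain ⟨u', v', rfl⟩ := h2
  exact ⟨u * u', v' * v, by simp only [mul_assoc]⟩

lemma idem_S1 {e u x v : M} (he : IsIdempotentElem e) (h : e = u * x * v) :
    e = e * (u * x) := by
  apply leJ_antisymm hJ
  · refine ⟨1, v, ?_⟩
    calc e = e * e := he.symm
    _ = e * (u * x * v) := by rw [← h]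
    _ = 1 * (e * (u * x)) * v := by simp only [one_mul, mul_assoc]
  · exact ⟨1, u * x, by rw [one_mul]⟩

lemma idem_S2 {e u x v : M} (he : IsIdempotentElem e) (h : e = u * x * v) :
    e = (x * v) * e := by
  apply leJ_antisymm hJ
  · refine ⟨u, 1, ?_⟩
    calc e = e * e := he.symm
    _ = (u * x * v) * e := by rw [← h]
    _ = u * (x * v * e) * 1 := by simp only [mul_one, mul_assoc]
  · exact ⟨x * v, 1, by rw [mul_one]⟩

lemma idem_absorb {e x : M} (he : IsIdempotentElem e) (h : leJ e x) :
    e * x = e ∧ x * e = e := by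
  obtain ⟨u, v, huv⟩ := h
  have h1 : e = e * (u * x) := idem_S1 hJ he huv
  have h2 : e = (x * v) * e := idem_S2 hJ he huv
  constructor
  · have := idem_S1 hJ he (show e = 1 * x * (v * e) by
      rw [one_mul, ← mul_assoc]; exact h2)
    rw [one_mul] at this
    exact this.symm
  · have := idem_S2 hJ he (show e = (e * u) * x * 1 by
      rw [mul_one, mul_assoc]; exact h1)
    rw [mul_one] at this
    exact this.symm

variable [Finite M]

lemma leJ_omega_self (x : M) : leJ (omegaPow x) x := by
  obtain ⟨n, hn, he⟩ := omegaPow_spec x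
  exact ⟨x ^ (n-1), 1, by rw [he, mul_one, ← pow_eq_mul_right' x hn]⟩

lemma omega_mul_self (x : M) : omegaPow x * x = omegaPow x :=
  (idem_absorb hJ (omegaPow_idem x) (leJ_omega_self hJ x)).1

lemma self_mul_omega (x : M) : x * omegaPow x = omegaPow x :=
  (idem_absorb hJ (omegaPow_idem x) (leJ_omega_self hJ x)).2

lemma idem_absorb_pow {e x : M} (hab : e * x = e) : ∀ n, e * x ^ n = e := by
  intro n
  induction n with
  | zero => simp
  | succ n ih => rw [pow_succ, ← mul_assoc, ih, hab]

lemma omega_mul_iff (x y : M) : x * y = y ↔ omegaPow x * y = y := by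
  obtain ⟨n, hn, he⟩ := omegaPow_spec x
  constructor
  · intro h
    have key : ∀ m, x ^ m * y = y := by
      intro m
      induction m with
      | zero => simp
      | succ m ih => rw [pow_succ', mul_assoc, ih, h]
    rw [he]; exact key n
  · intro h
    conv_lhs => rw [← h, ← mul_assoc, self_mul_omega hJ, h]

lemma omegaPow_mul (x y : M) :
    omegaPow (x * y) = omegaPow (omegaPow x * omegaPow y) := by
  set e := omegaPow (x * y) with hedef
  set f := omegaPow (omegaPow x * omegaPow y) with hfdef
  obtain ⟨n, hn, hen⟩ := omegaPow_spec (x * y)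
  obtain ⟨k, hk, hfk⟩ := omegaPow_spec (omegaPow x * omegaPow y)
  rw [← hedef] at hen
  rw [← hfdef] at hfk
  have he : IsIdempotentElem e := omegaPow_idem _
  have hf : IsIdempotentElem f := omegaPow_idem _
  have hex : leJ e x := ⟨1, y * (x*y)^(n-1), by
    rw [hen, one_mul, ← mul_assoc, ← pow_eq_mul_left' _ hn]⟩
  have hey : leJ e y := ⟨(x*y)^(n-1) * x, 1, by
    rw [hen, mul_one, mul_assoc, ← pow_eq_mul_right' _ hn]⟩
  have hexa := (idem_absorb hJ he hex).1
  have heya := (idem_absorb hJ he hey).1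
  obtain ⟨m, hm, hxm⟩ := omegaPow_spec x
  obtain ⟨p, hp, hyp'⟩ := omegaPow_spec y
  have hexo : e * omegaPow x = e := by rw [hxm]; exact idem_absorb_pow hJ hexa m
  have heyo : e * omegaPow y = e := by rw [hyp']; exact idem_absorb_pow hJ heya p
  have hef : e * f = e := by
    rw [hfk]
    apply idem_absorb_pow hJ
    rw [← mul_assoc, hexo, heyo]
  have hfx : leJ f x := by
    refine leJ_trans' ⟨1, omegaPow y * (omegaPow x * omegaPow y)^(k-1), ?_⟩
      (leJ_omega_self hJ x)
    rw [hfk, pow_eq_mul_left' _ hk]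
    simp only [one_mul, mul_assoc]
  have hfy : leJ f y := by
    refine leJ_trans' ⟨(omegaPow x * omegaPow y)^(k-1) * omegaPow x, 1, ?_⟩
      (leJ_omega_self hJ y)
    rw [hfk, mul_one, pow_eq_mul_right' _ hk]
    simp only [mul_assoc]
  have hfxa := (idem_absorb hJ hf hfx).1
  have hfya := (idem_absorb hJ hf hfy).1
  have hfe : f * e = f := by
    rw [hen]
    apply idem_absorb_pow hJ
    rw [← mul_assoc, hfxa, hfya]
  exact leJ_antisymm hJ ⟨e, 1, by rw [mul_one, hef]⟩ ⟨f, 1, by rw [mul_one, hfe]⟩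

end JT


section Maximal
variable {α : Type*}

lemma exists_rel_maximal (r : α → α → Prop)
    (htr : ∀ a b c, r a b → r b c → r a c)
    (has : ∀ a b, r a b → r b a → a = b) :
    ∀ s : Finset α, s.Nonempty → ∃ m ∈ s, ∀ g ∈ s, r m g → g = m := by
  classical
  intro s
  induction s using Finset.strongInduction with
  | _ s ih =>
    rintro ⟨f, hf⟩
    by_cases h : ∀ g ∈ s, r f g → g = f
    · exact ⟨f, hf, h⟩
    · push_neg at h
      obtain ⟨g, hg, hrfg, hgf⟩ := h
      set t := s.filter (fun z => r f z ∧ z ≠ f) with ht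
      have hgt : g ∈ t := Finset.mem_filter.2 ⟨hg, hrfg, hgf⟩
      have hts : t ⊂ s := by
        refine ⟨Finset.filter_subset _ _, fun hsub => ?_⟩
        have := hsub hf
        rw [ht, Finset.mem_filter] at this
        exact this.2.2 rfl
      obtain ⟨m, hmt, hmax⟩ := ih t hts ⟨g, hgt⟩
      rw [ht, Finset.mem_filter] at hmt
      obtain ⟨hms, hrfm, hmf⟩ := hmt
      refine ⟨m, hms, fun g' hg' hrmg' => ?_⟩
      have hrfg' : r f g' := htr _ _ _ hrfm hrmg'
      have hg'f : g' ≠ f := by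
        rintro rfl
        exact hmf (has _ _ hrmg' hrfm)
      exact hmax g' (Finset.mem_filter.2 ⟨hg', hrfg', hg'f⟩) hrmg'
end Maximal


/-- Let `K` be a field, `M` a finite `J`-trivial monoid, and let `E` be the commutative monoid
of idempotents of `M` under `e ⋆ f = (e * f)^ω`.  The `K`-linear map `Φ : K[M] → K[E]`
determined on the basis by `Φ(x) = x^ω` is a surjective algebra homomorphism whose kernel is
the Jacobson radical of `K[M]`; in particular it induces `K[M]/rad ≅ K[E]`. -/
theorem semisimple_quotient_iso (K : Type*) [Field K] {M : Type*} [Monoid M] [Fintype M]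
    (hJ : JTrivial M)
    [instE : CommMonoid {e : M // IsIdempotentElem e}]
    (hmul : ∀ a b : {e : M // IsIdempotentElem e},
      ((a * b : {e : M // IsIdempotentElem e}) : M) = omegaPow ((a : M) * (b : M)))
    (hone : ((1 : {e : M // IsIdempotentElem e}) : M) = 1) :
    ∃ Φ : MonoidAlgebra K M →ₐ[K] MonoidAlgebra K {e : M // IsIdempotentElem e},
      (∀ x : M, Φ (MonoidAlgebra.of K M x)
          = MonoidAlgebra.of K {e : M // IsIdempotentElem e}
              ⟨omegaPow x, omegaPow_idem x⟩) ∧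
      Function.Surjective Φ ∧
      RingHom.ker (Φ : MonoidAlgebra K M →+* MonoidAlgebra K {e : M // IsIdempotentElem e})
        = Ideal.jacobson (⊥ : Ideal (MonoidAlgebra K M)) := by
  classical
  -- the monoid homomorphism x ↦ x^ω
  have hψmul : ∀ x y : M, (⟨omegaPow (x * y), omegaPow_idem _⟩ : {e : M // IsIdempotentElem e})
      = (⟨omegaPow x, omegaPow_idem x⟩ : {e : M // IsIdempotentElem e})
          * ⟨omegaPow y, omegaPow_idem y⟩ := by
    intro x y
    apply Subtype.ext
    rw [hmul]
    exact omegaPow_mul hJ x y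
  let ψ : M →* {e : M // IsIdempotentElem e} :=
    { toOneHom := @OneHom.mk M {e : M // IsIdempotentElem e} _ instE.toMulOneClass.toOne
        (fun x => ⟨omegaPow x, omegaPow_idem x⟩)
        (by
          have h := congrArg Subtype.val
            (one_mul (⟨(1:M), IsIdempotentElem.one⟩ : {e : M // IsIdempotentElem e}))
          rw [hmul, mul_one, omegaPow_of_idem (Subtype.property _)] at h
          apply Subtype.ext
          rw [h]
          exact omegaPow_of_idem IsIdempotentElem.one)
      map_mul' := hψmul }
  have hψval : ∀ x : M, ((ψ x : {e : M // IsIdempotentElem e}) : M) = omegaPow x := by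
    intro x
    simp only [ψ, MonoidHom.coe_mk, OneHom.coe_mk]
  have hψ_of_idem : ∀ e : {e : M // IsIdempotentElem e}, ψ (e : M) = e := by
    intro e
    apply Subtype.ext
    rw [hψval]
    exact omegaPow_of_idem e.2
  let Φ : MonoidAlgebra K M →ₐ[K] MonoidAlgebra K {e : M // IsIdempotentElem e} :=
    MonoidAlgebra.mapDomainAlgHom K K ψ
  have hΦ : ∀ a : MonoidAlgebra K M, (Φ a).coeff = Finsupp.mapDomain ψ a.coeff := fun a => rfl
  have hΦsingle : ∀ (x : M) (c : K),
      Φ (MonoidAlgebra.single x c) = MonoidAlgebra.single (ψ x) c := by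
    intro x c
    show MonoidAlgebra.mapDomain ψ (MonoidAlgebra.single x c) = _
    exact MonoidAlgebra.mapDomain_single
  -- idempotency of {e : M // IsIdempotentElem e}
  have hEidem : ∀ f : {e : M // IsIdempotentElem e}, f * f = f := by
    intro f
    apply Subtype.ext
    rw [hmul]
    have : (f : M) * (f : M) = (f : M) := f.2
    rw [this]
    exact omegaPow_of_idem f.2
  -- nilpotency of elements of the kernel
  have hker_nil : ∀ a : MonoidAlgebra K M, Φ a = 0 → IsNilpotent a := by
    intro a hA
    -- coefficient lemma
    have hcoef : ∀ y : M, (a * MonoidAlgebra.single y (1:K)).coeff y = 0 := by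
      intro y
      rw [MonoidAlgebra.coeff_mul]
      have hinner : ∀ x c, ((MonoidAlgebra.single y (1:K)).coeff.sum fun a₂ b₂ =>
          if x * a₂ = y then c * b₂ else 0) = if x * y = y then c else 0 := by
        intro x c
        rw [MonoidAlgebra.coeff_single, Finsupp.sum_single_index (by simp)]
        simp
      calc (a.coeff.sum fun x c => (MonoidAlgebra.single y (1:K)).coeff.sum fun a₂ b₂ =>
              if x * a₂ = y then c * b₂ else 0)
          = a.coeff.sum fun x c => if x * y = y then c else 0 := by
            apply Finsupp.sum_congr
            intro x _
            exact hinner x (a.coeff x)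
        _ = a.coeff.sum fun x c => (fun (e : {e : M // IsIdempotentElem e}) (c : K) =>
              if (e : M) * y = y then c else 0) (ψ x) c := by
            apply Finsupp.sum_congr
            intro x _
            show (if x * y = y then a.coeff x else 0)
                = (if ((ψ x : {e : M // IsIdempotentElem e}) : M) * y = y then a.coeff x else 0)
            rw [hψval x]
            by_cases h : x * y = y
            · rw [if_pos h, if_pos ((omega_mul_iff hJ x y).mp h)]
            · rw [if_neg h, if_neg (fun hc => h ((omega_mul_iff hJ x y).mpr hc))]
        _ = (Finsupp.mapDomain ψ a.coeff).sum (fun (e : {e : M // IsIdempotentElem e}) (c : K) =>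
              if (e : M) * y = y then c else 0) := by
            rw [Finsupp.sum_mapDomain_index (fun b => by simp)
              (fun b c₁ c₂ => by split <;> simp)]
        _ = 0 := by rw [← hΦ, hA]; simp
    have hsupp : ∀ y z : M, z ∈ (a * MonoidAlgebra.single y (1:K)).coeff.support →
        leJ z y ∧ z ≠ y := by
      intro y z hz
      constructor
      · have := MonoidAlgebra.support_coeff_mul_subset a (MonoidAlgebra.single y (1:K)) hz
        rw [Finset.mem_mul] at this
        obtain ⟨p, hp, q, hq, hpq⟩ := this
        have hqy : q = y := Finset.mem_singleton.1 (Finsupp.support_single_subset hq)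
        exact ⟨p, 1, by rw [mul_one, ← hpq, hqy]⟩
      · rintro rfl
        rw [Finsupp.mem_support_iff] at hz
        exact hz (hcoef z)
    have haux : ∀ (n : ℕ) (y : M),
        (Finset.univ.filter fun z => leJ z y ∧ z ≠ y).card < n →
        a ^ n * MonoidAlgebra.single y (1:K) = 0 := by
      intro n
      induction n with
      | zero => intro y hy; simp at hy
      | succ n ih =>
        intro y hy
        rw [pow_succ, mul_assoc]
        set b := a * MonoidAlgebra.single y (1:K) with hb
        have hbsum : b = ∑ z ∈ b.coeff.support, MonoidAlgebra.single z (b.coeff z) := by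
          conv_lhs => rw [← MonoidAlgebra.sum_coeff_single b]
          rfl
        rw [hbsum, Finset.mul_sum]
        apply Finset.sum_eq_zero
        intro z hz
        obtain ⟨hle, hne⟩ := hsupp y z hz
        have hsub : (Finset.univ.filter fun w => leJ w z ∧ w ≠ z) ⊂
            (Finset.univ.filter fun w => leJ w y ∧ w ≠ y) := by
          constructor
          · intro w hw
            rw [Finset.mem_filter] at hw ⊢
            obtain ⟨_, hwz, hwnz⟩ := hw
            refine ⟨Finset.mem_univ _, leJ_trans' hwz hle, ?_⟩
            rintro rfl
            exact hne (leJ_antisymm hJ hle hwz)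
          · intro hcon
            have := hcon (Finset.mem_filter.2 ⟨Finset.mem_univ z, hle, hne⟩)
            rw [Finset.mem_filter] at this
            exact this.2.2 rfl
        have hcard := Finset.card_lt_card hsub
        have : MonoidAlgebra.single z (b.coeff z) = (b.coeff z) • MonoidAlgebra.single z (1:K) := by
          rw [MonoidAlgebra.smul_single, smul_eq_mul, mul_one]
        rw [this, mul_smul_comm, ih z (by omega), smul_zero]
    refine ⟨Fintype.card M, ?_⟩
    have h1 : a ^ Fintype.card M = a ^ Fintype.card M * MonoidAlgebra.single (1:M) (1:K) := by
      rw [← MonoidAlgebra.one_def, mul_one]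
    rw [h1]
    apply haux
    refine Finset.card_lt_card ⟨Finset.filter_subset _ _, fun hcon => ?_⟩
    · have := hcon (Finset.mem_univ 1)
      rw [Finset.mem_filter] at this
      exact this.2.2 rfl
  -- characters of K[{e : M // IsIdempotentElem e}]
  have hχmul : ∀ e f g : {e : M // IsIdempotentElem e}, e * (f * g) = e ↔ (e * f = e ∧ e * g = e) := by
    intro e f g
    constructor
    · intro h
      constructor
      · calc e * f = (e * (f * g)) * f := by rw [h]
          _ = e * ((f * f) * g) := by ac_rfl
          _ = e * (f * g) := by rw [hEidem f]
          _ = e := h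
      · calc e * g = (e * (f * g)) * g := by rw [h]
          _ = e * (f * (g * g)) := by ac_rfl
          _ = e * (f * g) := by rw [hEidem g]
          _ = e := h
    · rintro ⟨h1, h2⟩
      calc e * (f * g) = (e * f) * g := by rw [mul_assoc]
        _ = e * g := by rw [h1]
        _ = e := h2
  let χ : {e : M // IsIdempotentElem e} → ({e : M // IsIdempotentElem e} →* K) := fun e =>
    { toOneHom := @OneHom.mk {e : M // IsIdempotentElem e} K instE.toMulOneClass.toOne _
        (fun f => if e * f = e then 1 else 0)
        (by exact if_pos (mul_one e))
      map_mul' := fun f g => by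
        show (if e * (f * g) = e then (1:K) else 0)
            = (if e * f = e then (1:K) else 0) * (if e * g = e then (1:K) else 0)
        by_cases h1 : e * f = e <;> by_cases h2 : e * g = e
        · rw [if_pos ((hχmul e f g).2 ⟨h1, h2⟩), if_pos h1, if_pos h2, one_mul]
        · rw [if_neg (fun hc => h2 ((hχmul e f g).1 hc).2), if_pos h1, if_neg h2, one_mul]
        · rw [if_neg (fun hc => h1 ((hχmul e f g).1 hc).1), if_neg h1, zero_mul]
        · rw [if_neg (fun hc => h1 ((hχmul e f g).1 hc).1), if_neg h1, zero_mul] }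
  let χalg : {e : M // IsIdempotentElem e} → (MonoidAlgebra K {e : M // IsIdempotentElem e} →ₐ[K] K) := fun e => MonoidAlgebra.lift K K {e : M // IsIdempotentElem e} (χ e)
  -- separation of points
  have hsep : ∀ b : MonoidAlgebra K {e : M // IsIdempotentElem e}, (∀ e : {e : M // IsIdempotentElem e}, χalg e b = 0) → b = 0 := by
    intro b hb
    by_contra hbne
    have hne : b.coeff.support.Nonempty :=
      Finsupp.support_nonempty_iff.2 (fun h => hbne (MonoidAlgebra.coeff_eq_zero.1 h))
    obtain ⟨f₀, hf₀, hmax⟩ := exists_rel_maximal (fun f g : {e : M // IsIdempotentElem e} => f * g = f)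
      (fun p q s h1 h2 => by
        show p * s = p
        calc p * s = (p * q) * s := by rw [h1]
          _ = p * (q * s) := by rw [mul_assoc]
          _ = p * q := by rw [h2]
          _ = p := h1)
      (fun p q h1 h2 => by
        show p = q
        calc p = p * q := h1.symm
          _ = q * p := by rw [mul_comm]
          _ = q := h2)
      b.coeff.support hne
    have : χalg f₀ b = b.coeff f₀ := by
      have χval : ∀ e g : {e : M // IsIdempotentElem e},
          (χ e) g = if e * g = e then (1:K) else 0 := by
        intro e g
        simp only [χ, MonoidHom.coe_mk, OneHom.coe_mk]
      show MonoidAlgebra.lift K K {e : M // IsIdempotentElem e} (χ f₀) b = b.coeff f₀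
      rw [MonoidAlgebra.lift_apply, Finsupp.sum, Finset.sum_eq_single f₀]
      · rw [χval, if_pos (hEidem f₀), smul_eq_mul, mul_one]
      · intro g hg hgne
        rw [χval, if_neg (fun hc => hgne (hmax g hg hc)), smul_zero]
      · intro hcon
        exact absurd hf₀ hcon
    rw [hb f₀] at this
    exact (Finsupp.mem_support_iff.1 hf₀) this.symm
  refine ⟨Φ, ?_, ?_, ?_⟩
  · intro x
    show Φ (MonoidAlgebra.single x 1) = MonoidAlgebra.single _ 1
    rw [hΦsingle, show ψ x = ⟨omegaPow x, omegaPow_idem x⟩ from Subtype.ext (hψval x)]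
  · -- surjectivity
    intro b
    induction b using MonoidAlgebra.induction with
    | zero => exact ⟨0, map_zero Φ⟩
    | single_add e c f _ _ ih =>
      obtain ⟨u, hu⟩ := ih
      refine ⟨MonoidAlgebra.single (e : M) c + u, ?_⟩
      rw [map_add, hu, hΦsingle, hψ_of_idem]
  · -- kernel
    apply le_antisymm
    · -- ker ≤ jacobson
      intro x hx
      rw [RingHom.mem_ker] at hx
      have hx' : Φ x = 0 := hx
      apply Submodule.mem_sInf.2
      rintro J ⟨-, hJmax⟩
      by_contra hxJ
      have hxmem : x ∈ J ⊔ Ideal.span {x} :=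
        Submodule.mem_sup_right (Ideal.subset_span (Set.mem_singleton x))
      have hlt : J < J ⊔ Ideal.span {x} :=
        lt_of_le_of_ne le_sup_left (fun h => hxJ (by rw [h]; exact hxmem))
      have htop : J ⊔ Ideal.span {x} = ⊤ := (Ideal.isMaximal_def.mp hJmax).2 _ hlt
      have h1 : (1 : MonoidAlgebra K M) ∈ J ⊔ Ideal.span {x} := htop ▸ Submodule.mem_top
      obtain ⟨j, hjJ, s, hs, hjs⟩ := Submodule.mem_sup.1 h1
      obtain ⟨r, hr⟩ := Submodule.mem_span_singleton.1 hs
      have hnil : IsNilpotent (r * x) := by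
        apply hker_nil
        show Φ (r * x) = 0
        rw [map_mul, hx', mul_zero]
      have hj1 : j = 1 - r * x := by
        rw [← hr, smul_eq_mul] at hjs
        exact eq_sub_of_add_eq hjs
      have hju : IsUnit j := hj1 ▸ hnil.isUnit_one_sub
      exact hJmax.ne_top (Ideal.eq_top_of_isUnit_mem J hjJ hju)
    · -- jacobson ≤ ker
      intro x hx
      rw [RingHom.mem_ker]
      show Φ x = 0
      apply hsep
      intro e
      have : x ∈ RingHom.ker (((χalg e : MonoidAlgebra K {e : M // IsIdempotentElem e} →ₐ[K] K) :
          MonoidAlgebra K {e : M // IsIdempotentElem e} →+* K).comp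
          (Φ : MonoidAlgebra K M →+* MonoidAlgebra K {e : M // IsIdempotentElem e})) := by
        apply Submodule.mem_sInf.1 hx
        refine ⟨bot_le, RingHom.ker_isMaximal_of_surjective _ (fun c => ?_)⟩
        refine ⟨algebraMap K (MonoidAlgebra K M) c, ?_⟩
        show χalg e (Φ (algebraMap K (MonoidAlgebra K M) c)) = c
        rw [AlgHom.commutes, AlgHom.commutes]
        rfl
      rw [RingHom.mem_ker] at this
      exact this
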